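/- The infinite rank plactic monoid P_ℕ is left and right reversible: for all u, v ∈ P_ℕ there exist X, Y with uX = vY, and there exist X', Y' with X'u = Y'v. -/

import Mathlib

/-- The Knuth relations on words over the alphabet `ℕ`:
`xzy = zxy` for `x ≤ y < z` and `yxz = yzx` for `x < y ≤ z`. -/
def KnuthRelNat : FreeMonoid ℕ → FreeMonoid ℕ → Prop := fun a b =>
  (∃ x y z : ℕ, x ≤ y ∧ y < z ∧
      a = FreeMonoid.of x * FreeMonoid.of z * FreeMonoid.of y ∧
      b = FreeMonoid.of z * FreeMonoid.of x * FreeMonoid.of y) ∨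
  (∃ x y z : ℕ, x < y ∧ y ≤ z ∧
      a = FreeMonoid.of y * FreeMonoid.of x * FreeMonoid.of z ∧
      b = FreeMonoid.of y * FreeMonoid.of z * FreeMonoid.of x)

/-- The plactic monoid of infinite rank, presented by generators `ℕ` and all
Knuth relations. -/
def PlacticNat := (conGen KnuthRelNat).Quotient

instance : Monoid PlacticNat := inferInstanceAs (Monoid (conGen KnuthRelNat).Quotient)

/-- The canonical projection from the free monoid on `ℕ` to `PlacticNat`. -/
def PlacticNat.mk : FreeMonoid ℕ →* PlacticNat := Con.mk' _

namespace PlacticRev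

open FreeMonoid

abbrev mkP : FreeMonoid ℕ →* PlacticNat := PlacticNat.mk

lemma mk_rel {a b : FreeMonoid ℕ} (h : KnuthRelNat a b) : mkP a = mkP b :=
  ((conGen KnuthRelNat).eq).mpr (ConGen.Rel.of a b h)

/-- generator -/
def gen (x : ℕ) : PlacticNat := mkP (FreeMonoid.of x)

lemma rel1 {x y z : ℕ} (hxy : x ≤ y) (hyz : y < z) :
    gen x * gen z * gen y = gen z * gen x * gen y := by
  have h := mk_rel (Or.inl ⟨x, y, z, hxy, hyz, rfl, rfl⟩)
  simpa only [gen, map_mul] using h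

lemma rel2 {x y z : ℕ} (hxy : x < y) (hyz : y ≤ z) :
    gen y * gen x * gen z = gen y * gen z * gen x := by
  have h := mk_rel (Or.inr ⟨x, y, z, hxy, hyz, rfl, rfl⟩)
  simpa only [gen, map_mul] using h

/-- the descending word `b, b-1, ..., b-l+1` of length `l` -/
def col : ℕ → ℕ → FreeMonoid ℕ
  | _, 0 => 1
  | b, l + 1 => FreeMonoid.of b * col (b - 1) l

/-- column as an element of the plactic monoid -/
def cl (b l : ℕ) : PlacticNat := mkP (col b l)

lemma cl_zero (b : ℕ) : cl b 0 = 1 := by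
  simp [cl, col, map_one]

lemma cl_succ (b l : ℕ) : cl b (l + 1) = gen b * cl (b - 1) l := by
  simp [cl, col, gen, map_mul]

lemma cl_snoc : ∀ (l b : ℕ), cl b (l + 1) = cl b l * gen (b - l) := by
  intro l
  induction l with
  | zero => intro b; simp [cl_succ, cl_zero]
  | succ l ih =>
    intro b
    have e : b - 1 - l = b - (l + 1) := by omega
    rw [cl_succ, ih (b - 1), e, cl_succ b l, mul_assoc]

/-- Lemma A : move `x` to the right through a descending run of bigger letters,
with a trailing `x` as witness. -/
lemma lemA : ∀ (l x : ℕ), gen x * cl (x + l) l * gen x = cl (x + l) l * gen x * gen x := by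
  intro l
  induction l with
  | zero => intro x; simp [cl_zero]
  | succ l ih =>
    intro x
    have hsplit : cl (x + (l + 1)) (l + 1) = gen (x + l + 1) * cl (x + l) l := by
      rw [cl_succ]
      congr 2 <;> omega
    rw [hsplit]
    rcases Nat.eq_zero_or_pos l with hl | hl
    · subst hl
      simp only [cl_zero, mul_one, Nat.add_zero]
      exact rel1 (le_refl x) (by omega)
    · obtain ⟨m, rfl⟩ : ∃ m, l = m + 1 := ⟨l - 1, by omega⟩
      have hsplit2 : cl (x + (m + 1)) (m + 1) = gen (x + m + 1) * cl (x + m) m := by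
        rw [cl_succ]
        congr 2 <;> omega
      calc gen x * (gen (x + (m + 1) + 1) * cl (x + (m + 1)) (m + 1)) * gen x
          = gen x * (gen (x + (m + 1) + 1) * (gen (x + m + 1) * cl (x + m) m)) * gen x := by
            rw [hsplit2]
        _ = gen x * gen (x + (m + 1) + 1) * gen (x + m + 1) * (cl (x + m) m * gen x) := by
            simp only [mul_assoc]
        _ = gen (x + (m + 1) + 1) * gen x * gen (x + m + 1) * (cl (x + m) m * gen x) := by
            rw [rel1 (by omega : x ≤ x + m + 1) (by omega : x + m + 1 < x + (m + 1) + 1)]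
        _ = gen (x + (m + 1) + 1) * (gen x * (gen (x + m + 1) * cl (x + m) m) * gen x) := by
            simp only [mul_assoc]
        _ = gen (x + (m + 1) + 1) * (gen x * cl (x + (m + 1)) (m + 1) * gen x) := by
            rw [hsplit2]
        _ = gen (x + (m + 1) + 1) * (cl (x + (m + 1)) (m + 1) * gen x * gen x) := by
            rw [ih]
        _ = gen (x + (m + 1) + 1) * cl (x + (m + 1)) (m + 1) * gen x * gen x := by
            simp only [mul_assoc]

/-- Lemma B : move a trailing `x` to the left through a descending run of smaller
letters, with a leading `x` as witness. -/
lemma lemB : ∀ (l x : ℕ), l ≤ x → gen x * cl (x - 1) l * gen x = gen x * gen x * cl (x - 1) l := by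
  intro l
  induction l with
  | zero => intro x _; simp [cl_zero]
  | succ l ih =>
    intro x hx
    rcases Nat.eq_zero_or_pos l with hl | hl
    · subst hl
      have h1 : cl (x - 1) 1 = gen (x - 1) := by
        rw [cl_succ, cl_zero, mul_one]
      rw [h1]
      exact rel2 (by omega : x - 1 < x) (le_refl x)
    · obtain ⟨m, rfl⟩ : ∃ m, l = m + 1 := ⟨l - 1, by omega⟩
      have hs1 : cl (x - 1) (m + 1 + 1) = cl (x - 1) (m + 1) * gen (x - 1 - (m + 1)) :=
        cl_snoc (m + 1) (x - 1)
      have hs2 : cl (x - 1) (m + 1) = cl (x - 1) m * gen (x - 1 - m) := cl_snoc m (x - 1)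
      have hr2 : gen (x - 1 - m) * (gen (x - 1 - (m + 1)) * gen x) =
          gen (x - 1 - m) * (gen x * gen (x - 1 - (m + 1))) := by
        have := rel2 (by omega : x - 1 - (m + 1) < x - 1 - m) (by omega : x - 1 - m ≤ x)
        simpa only [mul_assoc] using this
      calc gen x * cl (x - 1) (m + 1 + 1) * gen x
          = gen x * (cl (x - 1) m * (gen (x - 1 - m) * (gen (x - 1 - (m + 1)) * gen x))) := by
            rw [hs1, hs2]; simp only [mul_assoc]
        _ = gen x * (cl (x - 1) m * (gen (x - 1 - m) * (gen x * gen (x - 1 - (m + 1))))) := by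
            rw [hr2]
        _ = gen x * cl (x - 1) (m + 1) * gen x * gen (x - 1 - (m + 1)) := by
            rw [hs2]; simp only [mul_assoc]
        _ = gen x * gen x * cl (x - 1) (m + 1) * gen (x - 1 - (m + 1)) := by
            rw [ih x (by omega)]
        _ = gen x * gen x * cl (x - 1) (m + 1 + 1) := by
            rw [hs1]; simp only [mul_assoc]

lemma col_split : ∀ (u v x : ℕ),
    cl (x + u) (u + 1 + v) = cl (x + u) u * (gen x * cl (x - 1) v) := by
  intro u
  induction u with
  | zero =>
    intro v x
    simp only [Nat.add_zero, Nat.zero_add, cl_zero, one_mul]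
    rw [show 0 + 1 + v = v + 1 by omega, cl_succ]
  | succ u ih =>
    intro v x
    have h1 : cl (x + (u + 1)) (u + 1 + 1 + v) = gen (x + u + 1) * cl (x + u) (u + 1 + v) := by
      rw [show u + 1 + 1 + v = (u + 1 + v) + 1 by omega, cl_succ]
      congr 2 <;> omega
    have h2 : cl (x + (u + 1)) (u + 1) = gen (x + u + 1) * cl (x + u) u := by
      rw [cl_succ]
      congr 2 <;> omega
    rw [h1, h2, ih, mul_assoc]

/-- centrality of a letter in a column containing it -/
lemma central (u v x : ℕ) (hv : v ≤ x) :
    gen x * cl (x + u) (u + 1 + v) = cl (x + u) (u + 1 + v) * gen x := by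
  rw [col_split]
  calc gen x * (cl (x + u) u * (gen x * cl (x - 1) v))
      = gen x * cl (x + u) u * gen x * cl (x - 1) v := by simp only [mul_assoc]
    _ = cl (x + u) u * gen x * gen x * cl (x - 1) v := by rw [lemA]
    _ = cl (x + u) u * (gen x * gen x * cl (x - 1) v) := by simp only [mul_assoc]
    _ = cl (x + u) u * (gen x * cl (x - 1) v * gen x) := by rw [lemB v x hv]
    _ = cl (x + u) u * (gen x * cl (x - 1) v) * gen x := by simp only [mul_assoc]

/-- nested columns commute -/
lemma colComm : ∀ (L' B' B L : ℕ), B' ≤ B → B + L' ≤ B' + L → L ≤ B + 1 →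
    cl B L * cl B' L' = cl B' L' * cl B L := by
  intro L'
  induction L' with
  | zero => intro B' B L _ _ _; simp [cl_zero]
  | succ L' ih =>
    intro B' B L h1 h2 h3
    have hc : gen B' * cl B L = cl B L * gen B' := by
      have hcen := central (B - B') (L - 1 - (B - B')) B' (by omega)
      rw [show B' + (B - B') = B by omega,
          show B - B' + 1 + (L - 1 - (B - B')) = L by omega] at hcen
      exact hcen
    rw [cl_succ]
    calc cl B L * (gen B' * cl (B' - 1) L')
        = cl B L * gen B' * cl (B' - 1) L' := by rw [mul_assoc]
      _ = gen B' * cl B L * cl (B' - 1) L' := by rw [← hc]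
      _ = gen B' * (cl B L * cl (B' - 1) L') := by rw [mul_assoc]
      _ = gen B' * (cl (B' - 1) L' * cl B L) := by
          rw [ih (B' - 1) B L (by omega) (by omega) h3]
      _ = gen B' * cl (B' - 1) L' * cl B L := by rw [mul_assoc]

/-- generic ordered product of a family of elements -/
def pr (f : ℕ → PlacticNat) : ℕ → ℕ → PlacticNat
  | _, 0 => 1
  | j, l + 1 => f j * pr f (j + 1) l

lemma pr_zero (f : ℕ → PlacticNat) (j : ℕ) : pr f j 0 = 1 := rfl

lemma pr_succ (f : ℕ → PlacticNat) (j l : ℕ) : pr f j (l + 1) = f j * pr f (j + 1) l := rfl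

lemma pr_snoc (f : ℕ → PlacticNat) : ∀ (l j : ℕ), pr f j (l + 1) = pr f j l * f (j + l) := by
  intro l
  induction l with
  | zero => intro j; simp [pr_succ, pr_zero]
  | succ l ih =>
    intro j
    have e : j + 1 + l = j + (l + 1) := by omega
    rw [pr_succ, ih (j + 1), e, pr_succ f j l, mul_assoc]

lemma pr_append (f : ℕ → PlacticNat) :
    ∀ (l1 j l2 : ℕ), pr f j (l1 + l2) = pr f j l1 * pr f (j + l1) l2 := by
  intro l1
  induction l1 with
  | zero => intro j l2; simp [pr_zero]
  | succ l1 ih =>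
    intro j l2
    rw [show l1 + 1 + l2 = (l1 + l2) + 1 by omega, pr_succ, ih (j + 1) l2, pr_succ f j l1,
        mul_assoc]
    congr 3
    omega

lemma pr_commute (f : ℕ → PlacticNat) (a : PlacticNat) :
    ∀ (l j : ℕ), (∀ i, j ≤ i → i < j + l → Commute a (f i)) → Commute a (pr f j l) := by
  intro l
  induction l with
  | zero => intro j _; rw [pr_zero]; exact Commute.one_right a
  | succ l ih =>
    intro j h
    rw [pr_succ]
    exact (h j le_rfl (by omega)).mul_right (ih (j + 1) (fun i h1 h2 => h i (by omega) (by omega)))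

/-! ### the `C` family : bottom-anchored nested columns -/

/-- the column `j-1, j-2, ..., 0` -/
def Cf (j : ℕ) : PlacticNat := cl (j - 1) j

lemma Cf_comm (j m : ℕ) : Commute (Cf j) (Cf m) := by
  rcases le_total j m with h | h
  · have := colComm j (j - 1) (m - 1) m (by omega) (by omega) (by omega)
    exact this.symm
  · have := colComm m (m - 1) (j - 1) j (by omega) (by omega) (by omega)
    exact this

lemma Cf_pr_comm (m j l : ℕ) : Commute (Cf m) (pr Cf j l) :=
  pr_commute Cf (Cf m) l j (fun i _ _ => Cf_comm m i)

/-- absorbing a letter into the next column: `x ⬝ c_x = c_{x+1}` -/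
lemma gen_Cf (x : ℕ) : gen x * Cf x = Cf (x + 1) := by
  show gen x * cl (x - 1) x = cl (x + 1 - 1) (x + 1)
  rw [show x + 1 - 1 = x by omega, cl_succ]

lemma pr_Cf_snoc (x : ℕ) : pr Cf 1 (x - 1) * Cf x = pr Cf 1 x := by
  cases x with
  | zero =>
    show pr Cf 1 0 * Cf 0 = pr Cf 1 0
    have : Cf 0 = 1 := by simp [Cf, cl_zero]
    rw [this, mul_one]
  | succ m =>
    rw [show m + 1 - 1 = m by omega, pr_snoc Cf m 1, show 1 + m = m + 1 by omega]

/-- the universal right multiple word -/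
def Yel (n : ℕ) : PlacticNat := pr Cf 1 n

lemma stepR (n x k : ℕ) (hx : x < n) :
    ∃ W : PlacticNat, gen x * (Yel n) ^ k * W = (Yel n) ^ (k + 1) := by
  refine ⟨Cf x * (pr Cf 1 (x - 1) * (Cf x * pr Cf (x + 2) (n - x - 1))), ?_⟩
  set c := Cf x with hc
  set c' := Cf (x + 1) with hc'
  set p := pr Cf 1 (x - 1) with hp
  set q := pr Cf (x + 2) (n - x - 1) with hq
  have hcy : Commute c ((Yel n) ^ k) := (Cf_pr_comm x 1 n).pow_right k
  have hc'y : Commute c' ((Yel n) ^ k) := (Cf_pr_comm (x + 1) 1 n).pow_right k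
  have hc'p : Commute c' p := Cf_pr_comm (x + 1) 1 (x - 1)
  have hcc' : Commute c c' := Cf_comm x (x + 1)
  have hy : Yel n = p * (c * (c' * q)) := by
    have h1 : Yel n = pr Cf 1 x * pr Cf (1 + x) (n - x) := by
      show pr Cf 1 n = _
      rw [← pr_append]
      congr 1
      omega
    have h2 : pr Cf (1 + x) (n - x) = c' * q := by
      rw [show n - x = (n - x - 1) + 1 by omega, pr_succ]
      rw [show (1 : ℕ) + x = x + 1 by omega]
    rw [h1, h2, ← pr_Cf_snoc x, mul_assoc]
  calc gen x * (Yel n) ^ k * (c * (p * (c * q)))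
      = gen x * ((Yel n) ^ k * c) * (p * (c * q)) := by simp only [mul_assoc]
    _ = gen x * (c * (Yel n) ^ k) * (p * (c * q)) := by rw [← hcy.eq]
    _ = gen x * c * ((Yel n) ^ k * (p * (c * q))) := by simp only [mul_assoc]
    _ = c' * ((Yel n) ^ k * (p * (c * q))) := by rw [gen_Cf]
    _ = c' * (Yel n) ^ k * (p * (c * q)) := by rw [mul_assoc]
    _ = (Yel n) ^ k * c' * (p * (c * q)) := by rw [hc'y.eq]
    _ = (Yel n) ^ k * (c' * p * (c * q)) := by simp only [mul_assoc]
    _ = (Yel n) ^ k * (p * c' * (c * q)) := by rw [hc'p.eq]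
    _ = (Yel n) ^ k * (p * (c' * c * q)) := by simp only [mul_assoc]
    _ = (Yel n) ^ k * (p * (c * c' * q)) := by rw [← hcc'.eq]
    _ = (Yel n) ^ k * (p * (c * (c' * q))) := by simp only [mul_assoc]
    _ = (Yel n) ^ k * Yel n := by rw [← hy]
    _ = (Yel n) ^ (k + 1) := (pow_succ _ _).symm

/-! ### the `D` family : top-anchored nested columns -/

/-- the column `n-1, n-2, ..., n-j` -/
def Df (n j : ℕ) : PlacticNat := cl (n - 1) j

lemma Df_comm (n j m : ℕ) (hj : j ≤ n) (hm : m ≤ n) : Commute (Df n j) (Df n m) := by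
  rcases le_total j m with h | h
  · have := colComm j (n - 1) (n - 1) m (le_refl _) (by omega) (by omega)
    exact this.symm
  · have := colComm m (n - 1) (n - 1) j (le_refl _) (by omega) (by omega)
    exact this

lemma Df_pr_comm (n m j l : ℕ) (hm : m ≤ n) (hjl : j + l ≤ n + 1) :
    Commute (Df n m) (pr (Df n) j l) :=
  pr_commute (Df n) (Df n m) l j (fun i h1 h2 => Df_comm n m i hm (by omega))

/-- absorbing a letter at the bottom of a top-anchored column -/
lemma Df_gen (n t : ℕ) : Df n t * gen (n - 1 - t) = Df n (t + 1) :=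
  (cl_snoc t (n - 1)).symm

lemma pr_Df_snoc (n t : ℕ) : pr (Df n) 1 (t - 1) * Df n t = pr (Df n) 1 t := by
  cases t with
  | zero =>
    show pr (Df n) 1 0 * Df n 0 = pr (Df n) 1 0
    have : Df n 0 = 1 := by simp [Df, cl_zero]
    rw [this, mul_one]
  | succ m =>
    rw [show m + 1 - 1 = m by omega, pr_snoc (Df n) m 1, show 1 + m = m + 1 by omega]

/-- the universal left multiple word -/
def Zel (n : ℕ) : PlacticNat := pr (Df n) 1 n

lemma stepL (n x k : ℕ) (hx : x < n) :
    ∃ W : PlacticNat, W * (Zel n) ^ k * gen x = (Zel n) ^ (k + 1) := by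
  obtain ⟨t, rfl, htn⟩ : ∃ t, x = n - 1 - t ∧ t ≤ n - 1 := ⟨n - 1 - x, by omega, by omega⟩
  refine ⟨pr (Df n) 1 (t - 1) * (Df n t * pr (Df n) (t + 2) (n - t - 1)) * Df n t, ?_⟩
  set d := Df n t with hd
  set d' := Df n (t + 1) with hd'
  set p := pr (Df n) 1 (t - 1) with hp
  set q := pr (Df n) (t + 2) (n - t - 1) with hq
  have hdz : Commute d ((Zel n) ^ k) :=
    (Df_pr_comm n t 1 n (by omega) (by omega)).pow_right k
  have hd'z : Commute d' ((Zel n) ^ k) :=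
    (Df_pr_comm n (t + 1) 1 n (by omega) (by omega)).pow_right k
  have hd'q : Commute d' q := Df_pr_comm n (t + 1) (t + 2) (n - t - 1) (by omega) (by omega)
  have hz : Zel n = p * (d * (d' * q)) := by
    have h1 : Zel n = pr (Df n) 1 t * pr (Df n) (1 + t) (n - t) := by
      show pr (Df n) 1 n = _
      rw [← pr_append]
      congr 1
      omega
    have h2 : pr (Df n) (1 + t) (n - t) = d' * q := by
      rw [show n - t = (n - t - 1) + 1 by omega, pr_succ]
      rw [show (1 : ℕ) + t = t + 1 by omega]
    rw [h1, h2, ← pr_Df_snoc n t, mul_assoc]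
  calc p * (d * q) * d * (Zel n) ^ k * gen (n - 1 - t)
      = p * (d * q) * (d * (Zel n) ^ k) * gen (n - 1 - t) := by simp only [mul_assoc]
    _ = p * (d * q) * ((Zel n) ^ k * d) * gen (n - 1 - t) := by rw [hdz.eq]
    _ = p * (d * q) * (Zel n) ^ k * (d * gen (n - 1 - t)) := by simp only [mul_assoc]
    _ = p * (d * q) * (Zel n) ^ k * d' := by rw [Df_gen]
    _ = p * (d * q) * ((Zel n) ^ k * d') := by rw [mul_assoc]
    _ = p * (d * q) * (d' * (Zel n) ^ k) := by rw [← hd'z.eq]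
    _ = p * (d * (q * d')) * (Zel n) ^ k := by simp only [mul_assoc]
    _ = p * (d * (d' * q)) * (Zel n) ^ k := by rw [← hd'q.eq]
    _ = Zel n * (Zel n) ^ k := by rw [← hz]
    _ = (Zel n) ^ (k + 1) := (pow_succ' _ _).symm

/-! ### divisibility of arbitrary words -/

lemma divR (n : ℕ) : ∀ l : List ℕ, (∀ a ∈ l, a < n) →
    ∃ X : PlacticNat, mkP (FreeMonoid.ofList l) * X = (Yel n) ^ l.length := by
  intro l
  induction l with
  | nil =>
    intro _
    refine ⟨1, ?_⟩
    have : (FreeMonoid.ofList ([] : List ℕ)) = 1 := rfl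
    simp [this]
  | cons a l ih =>
    intro h
    obtain ⟨X, hX⟩ := ih (fun b hb => h b (List.mem_cons_of_mem _ hb))
    obtain ⟨W, hW⟩ := stepR n a l.length (h a List.mem_cons_self)
    refine ⟨X * W, ?_⟩
    have hsplit : mkP (FreeMonoid.ofList (a :: l)) = gen a * mkP (FreeMonoid.ofList l) := by
      show mkP (FreeMonoid.of a * FreeMonoid.ofList l) = _
      rw [map_mul]
      rfl
    rw [hsplit, List.length_cons]
    calc gen a * mkP (FreeMonoid.ofList l) * (X * W)
        = gen a * (mkP (FreeMonoid.ofList l) * X) * W := by simp only [mul_assoc]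
      _ = gen a * (Yel n) ^ l.length * W := by rw [hX]
      _ = (Yel n) ^ (l.length + 1) := hW

lemma divL (n : ℕ) : ∀ l : List ℕ, (∀ a ∈ l, a < n) →
    ∃ X : PlacticNat, X * mkP (FreeMonoid.ofList l) = (Zel n) ^ l.length := by
  intro l
  induction l using List.reverseRecOn with
  | nil =>
    intro _
    refine ⟨1, ?_⟩
    have : (FreeMonoid.ofList ([] : List ℕ)) = 1 := rfl
    simp [this]
  | append_singleton l a ih =>
    intro h
    obtain ⟨X, hX⟩ := ih (fun b hb => h b (by simp [hb]))
    obtain ⟨W, hW⟩ := stepL n a l.length (h a (by simp))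
    refine ⟨W * X, ?_⟩
    have hsplit : mkP (FreeMonoid.ofList (l ++ [a])) = mkP (FreeMonoid.ofList l) * gen a := by
      show mkP (FreeMonoid.ofList l * FreeMonoid.of a) = _
      rw [map_mul]
      rfl
    rw [hsplit]
    have hlen : (l ++ [a]).length = l.length + 1 := by simp
    rw [hlen]
    calc W * X * (mkP (FreeMonoid.ofList l) * gen a)
        = W * (X * mkP (FreeMonoid.ofList l)) * gen a := by simp only [mul_assoc]
      _ = W * (Zel n) ^ l.length * gen a := by rw [hX]
      _ = (Zel n) ^ (l.length + 1) := hW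

lemma mem_le_foldr_max (a : ℕ) : ∀ l : List ℕ, a ∈ l → a ≤ l.foldr max 0 := by
  intro l
  induction l with
  | nil => intro h; cases h
  | cons b l ih =>
    intro h
    rcases List.mem_cons.mp h with h | h
    · subst h; exact le_max_left _ _
    · exact le_trans (ih h) (le_max_right _ _)

end PlacticRev

/-- The infinite rank plactic monoid is both left and right reversible. -/
theorem placticNat_left_and_right_reversible (u v : PlacticNat) :
    (∃ X Y : PlacticNat, u * X = v * Y) ∧ (∃ X' Y' : PlacticNat, X' * u = Y' * v) := by
  classical
  have hs : Function.Surjective PlacticNat.mk := Con.mk'_surjective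
  obtain ⟨wu, rfl⟩ := hs u
  obtain ⟨wv, rfl⟩ := hs v
  set lu := FreeMonoid.toList wu with hlu
  set lv := FreeMonoid.toList wv with hlv
  have hu : PlacticNat.mk wu = PlacticRev.mkP (FreeMonoid.ofList lu) := rfl
  have hv : PlacticNat.mk wv = PlacticRev.mkP (FreeMonoid.ofList lv) := rfl
  set n := (lu ++ lv).foldr max 0 + 1 with hn
  have hlub : ∀ a ∈ lu, a < n := by
    intro a ha
    have := PlacticRev.mem_le_foldr_max a (lu ++ lv) (List.mem_append_left _ ha)
    omega
  have hlvb : ∀ a ∈ lv, a < n := by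
    intro a ha
    have := PlacticRev.mem_le_foldr_max a (lu ++ lv) (List.mem_append_right _ ha)
    omega
  set K := max lu.length lv.length with hK
  constructor
  · obtain ⟨X1, h1⟩ := PlacticRev.divR n lu hlub
    obtain ⟨X2, h2⟩ := PlacticRev.divR n lv hlvb
    refine ⟨X1 * (PlacticRev.Yel n) ^ (K - lu.length), X2 * (PlacticRev.Yel n) ^ (K - lv.length),
      ?_⟩
    have e1 : PlacticNat.mk wu * (X1 * (PlacticRev.Yel n) ^ (K - lu.length)) =
        (PlacticRev.Yel n) ^ K := by
      rw [hu, ← mul_assoc, h1, ← pow_add]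
      congr 1
      have : lu.length ≤ K := le_max_left _ _
      omega
    have e2 : PlacticNat.mk wv * (X2 * (PlacticRev.Yel n) ^ (K - lv.length)) =
        (PlacticRev.Yel n) ^ K := by
      rw [hv, ← mul_assoc, h2, ← pow_add]
      congr 1
      have : lv.length ≤ K := le_max_right _ _
      omega
    rw [e1, e2]
  · obtain ⟨X1, h1⟩ := PlacticRev.divL n lu hlub
    obtain ⟨X2, h2⟩ := PlacticRev.divL n lv hlvb
    refine ⟨(PlacticRev.Zel n) ^ (K - lu.length) * X1, (PlacticRev.Zel n) ^ (K - lv.length) * X2,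
      ?_⟩
    have e1 : (PlacticRev.Zel n) ^ (K - lu.length) * X1 * PlacticNat.mk wu =
        (PlacticRev.Zel n) ^ K := by
      rw [hu, mul_assoc, h1, ← pow_add]
      congr 1
      have : lu.length ≤ K := le_max_left _ _
      omega
    have e2 : (PlacticRev.Zel n) ^ (K - lv.length) * X2 * PlacticNat.mk wv =
        (PlacticRev.Zel n) ^ K := by
      rw [hv, mul_assoc, h2, ← pow_add]
      congr 1
      have : lv.length ≤ K := le_max_right _ _
      omega
    rw [e1, e2]
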